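/- arXiv:1008.1773 — 5 statements merged into one kernel-verified Lean document; each statement's English description precedes it below -/
import Mathlib

section
/- In the ℂ(t)-algebra A' = ℂ(t)[σ₁, σ₂]/⟨(σ₁ - tσ₂)(σ₁ - t^{-1}σ₂)⟩, the relation [k+ℓ]_t · σ₁^k σ₂^ℓ = [k]_t · σ₁^{k+ℓ} + [ℓ]_t · σ₂^{k+ℓ} holds for all k, ℓ ≥ 0. -/
/-- The `t`-integer `[k]_t = t^{1-k} + t^{3-k} + ⋯ + t^{k-1}`. -/
noncomputable def tint {K : Type*} [Field K] (t : K) (k : ℕ) : K :=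
  ∑ i ∈ Finset.range k, t ^ ((1 - (k : ℤ)) + 2 * i)

/-- The field `ℂ(t)` of rational functions. -/
abbrev Kt : Type := RatFunc ℂ

/-- The indeterminate `t ∈ ℂ(t)`. -/
noncomputable def tt : Kt := RatFunc.X

/-- The ideal `⟨(σ₁ - tσ₂)(σ₁ - t⁻¹σ₂)⟩` of `ℂ(t)[σ₁, σ₂]`. -/
noncomputable def relIdeal : Ideal (MvPolynomial (Fin 2) Kt) :=
  Ideal.span {(MvPolynomial.X 0 - MvPolynomial.C tt * MvPolynomial.X 1) *
      (MvPolynomial.X 0 - MvPolynomial.C tt⁻¹ * MvPolynomial.X 1)}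

/-- The algebra `A' = ℂ(t)[σ₁, σ₂]/⟨(σ₁ - tσ₂)(σ₁ - t⁻¹σ₂)⟩`. -/
abbrev Aprime : Type := MvPolynomial (Fin 2) Kt ⧸ relIdeal

/-- The generators `σ₁, σ₂` of `A'` (indexed by `Fin 2`). -/
noncomputable def σA (i : Fin 2) : Aprime := Ideal.Quotient.mk relIdeal (MvPolynomial.X i)

/-- Scalars of `ℂ(t)` inside `A'`. -/
noncomputable def cst (a : Kt) : Aprime := Ideal.Quotient.mk relIdeal (MvPolynomial.C a)

/-! ### Auxiliary theory of `t`-integers -/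

section tintTheory
variable {K : Type*} [Field K]

lemma tint_succ (t : K) (ht : t ≠ 0) (m : ℕ) :
    tint t (m + 1) = t * tint t m + (t ^ m)⁻¹ := by
  have key : ∀ e : ℤ, t * t ^ e = t ^ (1 + e) := fun e => by
    rw [zpow_add₀ ht, zpow_one]
  unfold tint
  rw [Finset.sum_range_succ', Finset.mul_sum]
  congr 1
  · refine Finset.sum_congr rfl fun i _ => ?_
    rw [key]
    congr 1
    push_cast
    ring
  · rw [← zpow_natCast t m, ← zpow_neg]
    congr 1
    push_cast
    ring

lemma tint_succ' (t : K) (ht : t ≠ 0) (m : ℕ) :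
    tint t (m + 1) * t ^ m = t * tint t m * t ^ m + 1 := by
  rw [tint_succ t ht, add_mul, inv_mul_cancel₀ (pow_ne_zero m ht)]

lemma tint_aux (t : K) (ht : t ≠ 0) (m : ℕ) :
    tint t m * (t * t - 1) * t ^ m = (t ^ m * t ^ m - 1) * t := by
  induction m with
  | zero => simp [tint]
  | succ m ih =>
    have h := tint_succ' t ht m
    have e : tint t (m + 1) * (t * t - 1) * t ^ (m + 1)
        = t * ((tint t (m + 1) * t ^ m) * (t * t - 1)) := by ring
    rw [e, h]
    linear_combination t ^ 2 * ih

lemma tint_F1 {t : K} (ht : t ≠ 0) (ht2 : t * t - 1 ≠ 0) (k ℓ : ℕ) :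
    tint t (k + ℓ) * t ^ k = tint t k * t ^ (k + ℓ) + tint t ℓ := by
  apply mul_right_cancel₀ (mul_ne_zero ht2 (pow_ne_zero (k + ℓ) ht))
  linear_combination t ^ k * tint_aux t ht (k + ℓ) - t ^ (k + 2 * ℓ) * tint_aux t ht k
    - t ^ k * tint_aux t ht ℓ

lemma tint_F2 {t : K} (ht : t ≠ 0) (ht2 : t * t - 1 ≠ 0) (k ℓ : ℕ) :
    tint t (k + ℓ) * ((-t⁻¹) ^ k * (-1) ^ ℓ)
      = tint t k * (-t⁻¹) ^ (k + ℓ) + tint t ℓ * (-1) ^ (k + ℓ) := by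
  have F := tint_F1 ht ht2 ℓ k
  rw [add_comm ℓ k] at F
  have e1 : (t ^ k)⁻¹ * t ^ (k + ℓ) = t ^ ℓ := by
    rw [pow_add, inv_mul_cancel_left₀ (pow_ne_zero k ht)]
  have e2 : (t ^ (k + ℓ))⁻¹ * t ^ (k + ℓ) = 1 := inv_mul_cancel₀ (pow_ne_zero _ ht)
  have n1 : ∀ n : ℕ, (-t⁻¹) ^ n = (-1) ^ n * (t ^ n)⁻¹ := fun n => by
    rw [neg_pow, inv_pow]
  rw [n1, n1]
  apply mul_right_cancel₀ (pow_ne_zero (k + ℓ) ht)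
  linear_combination ((-1 : K) ^ (k + ℓ)) *
    (tint t (k + ℓ) * e1 - tint t k * e2 + F)

end tintTheory

/-! ### Ring-theoretic helpers -/

section ringh
variable {R : Type*} [CommRing R]

lemma pow_mul_pow_eq_zero' {x y : R} (h : x * y = 0) {k ℓ : ℕ} (hk : 1 ≤ k) (hℓ : 1 ≤ ℓ) :
    x ^ k * y ^ ℓ = 0 := by
  obtain ⟨k, rfl⟩ := Nat.exists_eq_add_of_le hk
  obtain ⟨ℓ, rfl⟩ := Nat.exists_eq_add_of_le hℓ
  have e : x ^ (1 + k) * y ^ (1 + ℓ) = (x * y) * (x ^ k * y ^ ℓ) := by ring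
  rw [e, h, zero_mul]

lemma add_pow_of_mul_eq_zero' {x y : R} (h : x * y = 0) {n : ℕ} (hn : 1 ≤ n) :
    (x + y) ^ n = x ^ n + y ^ n := by
  induction n with
  | zero => omega
  | succ n ih =>
    rcases Nat.lt_or_ge n 1 with h1 | h1
    · interval_cases n
      · simp
    · rw [pow_succ, ih h1]
      have c1 : x ^ n * y ^ 1 = 0 := pow_mul_pow_eq_zero' h h1 le_rfl
      have c2 : x ^ 1 * y ^ n = 0 := pow_mul_pow_eq_zero' h le_rfl h1
      linear_combination c1 + c2

lemma mix_pow {x y a₁ a₂ b₁ b₂ : R} (h : x * y = 0) {k ℓ : ℕ} (hn : 1 ≤ k + ℓ) :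
    (a₁ * x + a₂ * y) ^ k * (b₁ * x + b₂ * y) ^ ℓ =
      a₁ ^ k * b₁ ^ ℓ * x ^ (k + ℓ) + a₂ ^ k * b₂ ^ ℓ * y ^ (k + ℓ) := by
  have hab : ∀ a b : R, (a * x) * (b * y) = 0 := fun a b => by
    rw [mul_mul_mul_comm, h, mul_zero]
  rcases Nat.lt_or_ge k 1 with hk | hk
  · interval_cases k
    simp only [pow_zero, one_mul, zero_add] at hn ⊢
    rw [add_pow_of_mul_eq_zero' (hab _ _) hn, mul_pow, mul_pow]
  rcases Nat.lt_or_ge ℓ 1 with hℓ | hℓ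
  · interval_cases ℓ
    simp only [pow_zero, mul_one, add_zero]
    rw [add_pow_of_mul_eq_zero' (hab _ _) hk, mul_pow, mul_pow]
  · rw [add_pow_of_mul_eq_zero' (hab _ _) hk, add_pow_of_mul_eq_zero' (hab _ _) hℓ,
      mul_pow, mul_pow, mul_pow, mul_pow]
    have c1 : x ^ k * y ^ ℓ = 0 := pow_mul_pow_eq_zero' h hk hℓ
    have c2 : x ^ ℓ * y ^ k = 0 := pow_mul_pow_eq_zero' h hℓ hk
    linear_combination (a₁ ^ k * b₂ ^ ℓ) * c1 + (a₂ ^ k * b₁ ^ ℓ) * c2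

end ringh

/-! ### Structure of `A'` -/

noncomputable def cstHom : Kt →+* Aprime := (Ideal.Quotient.mk relIdeal).comp MvPolynomial.C
lemma cst_def (a : Kt) : cst a = cstHom a := rfl

noncomputable def dd : Kt := tt - tt⁻¹
noncomputable def uu : Aprime := σA 0 - cst tt * σA 1
noncomputable def vv : Aprime := σA 0 - cst tt⁻¹ * σA 1

lemma tt_ne : (tt : Kt) ≠ 0 := RatFunc.X_ne_zero

lemma tt2_ne : tt * tt - 1 ≠ 0 := by
  intro h
  have h2 : (Polynomial.X * Polynomial.X - 1 : Polynomial ℂ) = 0 := by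
    apply RatFunc.algebraMap_injective ℂ
    rw [map_sub, map_mul, map_one, RatFunc.algebraMap_X, map_zero]
    exact h
  have := congrArg (Polynomial.coeff · 0) h2
  simp at this

lemma dd_ne : (dd : Kt) ≠ 0 := by
  intro h
  apply tt2_ne
  have e : tt * (tt - tt⁻¹) = tt * tt - 1 := by
    rw [mul_sub, mul_inv_cancel₀ tt_ne]
  rw [← e, show tt - tt⁻¹ = dd from rfl, h, mul_zero]

lemma uv_zero : vv * uu = 0 := by
  have e : vv * uu = Ideal.Quotient.mk relIdeal
      ((MvPolynomial.X 0 - MvPolynomial.C tt * MvPolynomial.X 1) *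
        (MvPolynomial.X 0 - MvPolynomial.C tt⁻¹ * MvPolynomial.X 1)) := by
    simp only [uu, vv, σA, cst, map_mul, map_sub]
    ring
  rw [e, Ideal.Quotient.eq_zero_iff_mem]
  exact Ideal.subset_span rfl

lemma hd1 : cst dd * σA 0 = cst tt * vv + cst (-tt⁻¹) * uu := by
  simp only [uu, vv, dd, cst_def, map_sub, map_neg]
  ring

lemma hd2 : cst dd * σA 1 = cst 1 * vv + cst (-1) * uu := by
  simp only [uu, vv, dd, cst_def, map_sub, map_neg, map_one]
  ring

lemma expand (k ℓ : ℕ) (h : 1 ≤ k + ℓ) :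
    cst (dd ^ (k + ℓ)) * (σA 0 ^ k * σA 1 ^ ℓ) =
      cst (tt ^ k * 1 ^ ℓ) * vv ^ (k + ℓ) + cst ((-tt⁻¹) ^ k * (-1) ^ ℓ) * uu ^ (k + ℓ) := by
  have step1 : cst (dd ^ (k + ℓ)) * (σA 0 ^ k * σA 1 ^ ℓ)
      = (cst dd * σA 0) ^ k * (cst dd * σA 1) ^ ℓ := by
    simp only [cst_def, map_pow]
    ring
  rw [step1, hd1, hd2, mix_pow uv_zero h]
  simp only [cst_def, map_mul, map_pow]

/-- In `A' = ℂ(t)[σ₁,σ₂]/⟨(σ₁ - tσ₂)(σ₁ - t⁻¹σ₂)⟩` one has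
`[k+ℓ]_t · σ₁^k σ₂^ℓ = [k]_t · σ₁^{k+ℓ} + [ℓ]_t · σ₂^{k+ℓ}` for all `k, ℓ ≥ 0`. -/
theorem tint_smul_monomial (k ℓ : ℕ) :
    cst (tint tt (k + ℓ)) * (σA 0 ^ k * σA 1 ^ ℓ) =
      cst (tint tt k) * σA 0 ^ (k + ℓ) + cst (tint tt ℓ) * σA 1 ^ (k + ℓ) := by
  rcases Nat.lt_or_ge (k + ℓ) 1 with h0 | hN
  · obtain ⟨rfl, rfl⟩ : k = 0 ∧ ℓ = 0 := by omega
    simp only [tint, Finset.range_zero, Finset.sum_empty, Nat.add_zero, cst_def, map_zero,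
      zero_mul, add_zero]
  · have hu : IsUnit (cst (dd ^ (k + ℓ))) := by
      apply IsUnit.of_mul_eq_one (cst ((dd ^ (k + ℓ))⁻¹))
      rw [cst_def, cst_def, ← map_mul, mul_inv_cancel₀ (pow_ne_zero _ dd_ne), map_one]
    rw [← hu.mul_right_inj]
    have e1 := expand k ℓ hN
    have e2 := expand (k + ℓ) 0 (by omega)
    have e3 := expand 0 (k + ℓ) (by omega)
    simp only [cst_def, pow_zero, one_pow, mul_one, one_mul, Nat.add_zero, Nat.zero_add,
      map_one] at e1 e2 e3 ⊢
    have C1 : cstHom (tint tt (k + ℓ)) * cstHom (tt ^ k)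
        = cstHom (tint tt k) * cstHom (tt ^ (k + ℓ)) + cstHom (tint tt ℓ) := by
      rw [← map_mul, ← map_mul, ← map_add]
      exact congrArg cstHom (tint_F1 tt_ne tt2_ne k ℓ)
    have C2 : cstHom (tint tt (k + ℓ)) * cstHom ((-tt⁻¹) ^ k * (-1) ^ ℓ)
        = cstHom (tint tt k) * cstHom ((-tt⁻¹) ^ (k + ℓ))
          + cstHom (tint tt ℓ) * cstHom ((-1) ^ (k + ℓ)) := by
      rw [← map_mul, ← map_mul, ← map_mul, ← map_add]
      exact congrArg cstHom (tint_F2 tt_ne tt2_ne k ℓ)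
    linear_combination cstHom (tint tt (k + ℓ)) * e1 - cstHom (tint tt k) * e2
      - cstHom (tint tt ℓ) * e3 + vv ^ (k + ℓ) * C1 + uu ^ (k + ℓ) * C2
end

section
/- Let q > 0 be a real number. Then the function G(x) = ([x]_q)² = ((q^x - q^{-x})/(q - q^{-1}))² is superadditive on [0, ∞): G(x+y) ≥ G(x) + G(y) for all x, y ≥ 0, with equality if and only if xy = 0. -/
/-- `G(x) = ([x]_q)² = ((q^x - q^{-x})/(q - q⁻¹))²` for real `q > 0`. -/
noncomputable def Gfun (q x : ℝ) : ℝ := ((q ^ x - q ^ (-x)) / (q - q⁻¹)) ^ 2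

lemma gfun_key (u v : ℝ) (hu : 0 < u) (hv : 0 < v) :
    (u * v - (u * v)⁻¹) ^ 2 - (u - u⁻¹) ^ 2 - (v - v⁻¹) ^ 2
      = (u ^ 2 - 1) * (v ^ 2 - 1) * (1 + (u ^ 2 * v ^ 2)⁻¹) := by
  field_simp
  ring

lemma gfun_sign (q : ℝ) (hq : 0 < q) (x : ℝ) (hx : 0 ≤ x) :
    (0 < q ^ x - 1 ∧ 1 < q) ∨ (q ^ x - 1 < 0 ∧ q < 1) ∨ (q ^ x - 1 = 0) := by
  rcases lt_trichotomy q 1 with h | h | h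
  · rcases eq_or_lt_of_le hx with h0 | h0
    · right; right; rw [← h0, Real.rpow_zero]; ring
    · right; left
      exact ⟨sub_neg.2 (Real.rpow_lt_one hq.le h h0), h⟩
  · right; right; rw [h, Real.one_rpow]; ring
  · rcases eq_or_lt_of_le hx with h0 | h0
    · right; right; rw [← h0, Real.rpow_zero]; ring
    · left; exact ⟨sub_pos.2 ((Real.one_lt_rpow_iff_of_pos hq).2 (Or.inl ⟨h, h0⟩)), h⟩

lemma gfun_eq_one_iff (q : ℝ) (hq : 0 < q) (hq1 : q ≠ 1) (x : ℝ) :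
    q ^ x = 1 ↔ x = 0 := by
  constructor
  · intro h
    have hl : x * Real.log q = 0 := by
      rw [← Real.log_rpow hq, h, Real.log_one]
    have hlog : Real.log q ≠ 0 := by
      intro h0
      rcases Real.log_eq_zero.1 h0 with h' | h' | h' <;> simp_all <;> linarith
    exact (mul_eq_zero.1 hl).resolve_right hlog
  · rintro rfl; exact Real.rpow_zero q

/-- For real `q > 0` (`q ≠ 1`), the function `G(x) = ([x]_q)²` is
superadditive on `[0, ∞)`: `G(x+y) ≥ G(x) + G(y)` for all `x, y ≥ 0`, with equality if
and only if `xy = 0`. -/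
theorem Gfun_superadditive (q : ℝ) (hq : 0 < q) (hq1 : q ≠ 1) (x y : ℝ)
    (hx : 0 ≤ x) (hy : 0 ≤ y) :
    Gfun q x + Gfun q y ≤ Gfun q (x + y) ∧
      (Gfun q (x + y) = Gfun q x + Gfun q y ↔ x * y = 0) := by
  obtain ⟨u, hu_def⟩ : ∃ u : ℝ, u = q ^ x := ⟨_, rfl⟩
  obtain ⟨v, hv_def⟩ : ∃ v : ℝ, v = q ^ y := ⟨_, rfl⟩
  have hu : 0 < u := hu_def ▸ Real.rpow_pos_of_pos hq x
  have hv : 0 < v := hv_def ▸ Real.rpow_pos_of_pos hq y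
  have hd0 : q - q⁻¹ ≠ 0 := by
    intro h
    apply hq1
    have h' : q = q⁻¹ := sub_eq_zero.1 h
    have h2 : q * q = 1 := by
      nth_rewrite 1 [h']
      exact inv_mul_cancel₀ hq.ne'
    nlinarith
  have hd : 0 < (q - q⁻¹) ^ 2 := by positivity
  have hGx : Gfun q x = (u - u⁻¹) ^ 2 / (q - q⁻¹) ^ 2 := by
    rw [Gfun, div_pow, Real.rpow_neg hq.le, ← hu_def]
  have hGy : Gfun q y = (v - v⁻¹) ^ 2 / (q - q⁻¹) ^ 2 := by
    rw [Gfun, div_pow, Real.rpow_neg hq.le, ← hv_def]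
  have hGxy : Gfun q (x + y) = (u * v - (u * v)⁻¹) ^ 2 / (q - q⁻¹) ^ 2 := by
    rw [Gfun, div_pow, Real.rpow_neg hq.le, Real.rpow_add hq, ← hu_def, ← hv_def]
  have hkey : Gfun q (x + y) - Gfun q x - Gfun q y
      = (u ^ 2 - 1) * (v ^ 2 - 1) * (1 + (u ^ 2 * v ^ 2)⁻¹) / (q - q⁻¹) ^ 2 := by
    rw [hGx, hGy, hGxy, div_sub_div_same, div_sub_div_same, gfun_key u v hu hv]
  have huv1 : 0 ≤ (u - 1) * (v - 1) := by
    rcases lt_or_gt_of_ne hq1 with hqlt | hqgt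
    · have h1 : u ≤ 1 := hu_def ▸ Real.rpow_le_one hq.le hqlt.le hx
      have h2 : v ≤ 1 := hv_def ▸ Real.rpow_le_one hq.le hqlt.le hy
      nlinarith
    · have h1 : 1 ≤ u := hu_def ▸ Real.one_le_rpow hqgt.le hx
      have h2 : 1 ≤ v := hv_def ▸ Real.one_le_rpow hqgt.le hy
      nlinarith
  have hprod : 0 ≤ (u ^ 2 - 1) * (v ^ 2 - 1) := by
    have h4 : 0 ≤ (u - 1) * (v - 1) * ((u + 1) * (v + 1)) :=
      mul_nonneg huv1 (by positivity)
    nlinarith [h4]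
  have hpos : 0 < 1 + (u ^ 2 * v ^ 2)⁻¹ := by positivity
  have hle : Gfun q x + Gfun q y ≤ Gfun q (x + y) := by
    nlinarith [div_nonneg (mul_nonneg hprod hpos.le) hd.le]
  refine ⟨hle, ?_⟩
  constructor
  · intro h
    have hz0 : (u ^ 2 - 1) * (v ^ 2 - 1) * (1 + (u ^ 2 * v ^ 2)⁻¹) / (q - q⁻¹) ^ 2 = 0 := by
      rw [← hkey]; linarith
    have hz : (u ^ 2 - 1) * (v ^ 2 - 1) * (1 + (u ^ 2 * v ^ 2)⁻¹) = 0 :=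
      (div_eq_zero_iff.1 hz0).resolve_right (pow_ne_zero 2 hd0)
    have hz2 : (u ^ 2 - 1) * (v ^ 2 - 1) = 0 :=
      (mul_eq_zero.1 hz).resolve_right hpos.ne'
    rcases mul_eq_zero.1 hz2 with h' | h'
    · have h'' : (u - 1) * (u + 1) = 0 := by linear_combination h'
      have hu1 : u = 1 := by
        rcases mul_eq_zero.1 h'' with h3 | h3
        · linarith
        · linarith
      have : x = 0 := (gfun_eq_one_iff q hq hq1 x).1 (hu_def.symm.trans hu1)
      rw [this, zero_mul]
    · have h'' : (v - 1) * (v + 1) = 0 := by linear_combination h'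
      have hv1 : v = 1 := by
        rcases mul_eq_zero.1 h'' with h3 | h3
        · linarith
        · linarith
      have : y = 0 := (gfun_eq_one_iff q hq hq1 y).1 (hv_def.symm.trans hv1)
      rw [this, mul_zero]
  · intro h
    rcases mul_eq_zero.1 h with rfl | rfl
    · have hu1 : u = 1 := by rw [hu_def, Real.rpow_zero]
      have : Gfun q 0 = 0 := by rw [hGx, hu1]; simp
      rw [zero_add, this, zero_add]
    · have hv1 : v = 1 := by rw [hv_def, Real.rpow_zero]
      have : Gfun q 0 = 0 := by rw [hGy, hv1]; simp
      rw [add_zero, this, add_zero]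
end

section
/- Let G be a bipartite graph of girth at least 2n, and let Δ₁, ..., Δ_m be pairwise antipodal edges (i.e., the minimal distance between vertices of distinct Δᵢ, Δⱼ is exactly n-1). Let r₁, ..., r_m be positive integers with rᵢ + rⱼ ≥ n for all i ≠ j. Then the graph G' obtained from G by attaching an m-pod with bases Δ₁, ..., Δ_m and legs of lengths r₁, ..., r_m (with leg endpoints chosen so G' is bipartite) still has girth at least 2n. -/
/-- The vertex set of the graph obtained from `G` (on `V`) by attaching an `m`-pod:
the old vertices, a new center, and `r i - 1` new internal vertices on the `i`-th leg. -/
def podVerts (V : Type*) {m : ℕ} (r : Fin m → ℕ) : Type _ :=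
  V ⊕ (Unit ⊕ (Σ i : Fin m, Fin (r i - 1)))

/-- The adjacency generating relation for the pod attachment: old edges of `G`; the path
(leg) `x i — p⟨i,0⟩ — ⋯ — p⟨i, r i - 2⟩ — z` of length `r i` from `x i` to the center `z`
(if `r i = 1` the leg is the single edge `x i — z`). -/
def podRel (V : Type*) {m : ℕ} (r : Fin m → ℕ) (G : SimpleGraph V) (x : Fin m → V) :
    podVerts V r → podVerts V r → Prop
  | Sum.inl u, Sum.inl v => G.Adj u v
  | Sum.inl u, Sum.inr (Sum.inl _) => ∃ i, r i = 1 ∧ u = x i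
  | Sum.inl u, Sum.inr (Sum.inr ⟨i, p⟩) => u = x i ∧ (p : ℕ) = 0
  | Sum.inr (Sum.inl _), Sum.inr (Sum.inr ⟨_i, p⟩) => (p : ℕ) + 2 = r _i
  | Sum.inr (Sum.inr ⟨i, p⟩), Sum.inr (Sum.inr ⟨i', p'⟩) => i = i' ∧ (p : ℕ) + 1 = (p' : ℕ)
  | _, _ => False

/-- The graph `G'` obtained from `G` by attaching the `m`-pod with bases
`Δᵢ = {a i, b i}`, chosen leg endpoints `x i`, and legs of lengths `r i`. -/
def podGraph (V : Type*) {m : ℕ} (r : Fin m → ℕ) (G : SimpleGraph V) (x : Fin m → V) :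
    SimpleGraph (podVerts V r) :=
  SimpleGraph.fromRel (podRel V r G x)

attribute [reducible] podVerts

namespace PodAux

open SimpleGraph Sum Walk

section Generic

variable {V : Type*} {G : SimpleGraph V}

lemma my_length_rotate [DecidableEq V] {u v : V} (c : G.Walk v v) (h : u ∈ c.support) :
    (c.rotate u h).length = c.length := by
  have h1 := congrArg Walk.length (c.take_spec h)
  rw [Walk.length_append] at h1
  rw [show c.rotate u h = (c.dropUntil u h).append (c.takeUntil u h) from rfl,
    Walk.length_append]
  omega

lemma loop_eq_nil {v : V} (q : G.Walk v v) (h : q.support.Nodup) : q = Walk.nil := by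
  cases q with
  | nil => rfl
  | cons ha q₀ =>
    exfalso
    rw [Walk.support_cons, List.nodup_cons] at h
    exact h.1 (q₀.end_mem_support)

/-- membership in a rotated closed walk -/
lemma mem_support_rotate [DecidableEq V] {u v y : V} (c : G.Walk v v) (h : u ∈ c.support)
    (hy : y ≠ u) (hmem : y ∈ (c.rotate u h).support) : y ∈ c.support := by
  have hperm := (Walk.support_rotate c u h).perm
  rw [(c.rotate u h).support_eq_cons] at hmem
  rcases List.mem_cons.mp hmem with hmem | hmem
  · exact absurd hmem hy
  · have : y ∈ c.support.tail := hperm.mem_iff.mp hmem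
    rw [c.support_eq_cons]
    exact List.mem_cons_of_mem _ this

lemma walk_parity (c : V → ZMod 2) (hbip : ∀ u v, G.Adj u v → c u ≠ c v) :
    ∀ {s t : V} (w : G.Walk s t), (w.length : ZMod 2) = c s + c t := by
  intro s t w
  induction w with
  | nil =>
    simp only [Walk.length_nil, Nat.cast_zero]
    have : ∀ a : ZMod 2, 0 = a + a := by decide
    exact this _
  | @cons s v t h q ih =>
    have hkey : ∀ a b : ZMod 2, a ≠ b → a = b + 1 := by decide
    have hcv : c s = c v + 1 := hkey _ _ (hbip _ _ h)
    rw [Walk.length_cons]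
    push_cast
    rw [ih, hcv]
    ring

end Generic

section Pod

variable {V : Type*} {m : ℕ} {r : Fin m → ℕ} {G : SimpleGraph V} {x : Fin m → V}

/-- center -/
def ctr : podVerts V r := Sum.inr (Sum.inl ())

/-- internal leg vertex -/
def leg (i : Fin m) (k : Fin (r i - 1)) : podVerts V r := Sum.inr (Sum.inr ⟨i, k⟩)

lemma podRel_inl_inl (u v : V) : podRel V r G x (.inl u) (.inl v) ↔ G.Adj u v := Iff.rfl
lemma podRel_inl_ctr (u : V) :
    podRel V r G x (.inl u) ctr ↔ ∃ i, r i = 1 ∧ u = x i := Iff.rfl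
lemma podRel_inl_leg (u : V) (i : Fin m) (k : Fin (r i - 1)) :
    podRel V r G x (.inl u) (leg i k) ↔ (u = x i ∧ (k : ℕ) = 0) := Iff.rfl
lemma podRel_ctr_inl (u : V) : podRel V r G x ctr (.inl u) ↔ False := Iff.rfl
lemma podRel_ctr_leg (i : Fin m) (k : Fin (r i - 1)) :
    podRel V r G x ctr (leg i k) ↔ (k : ℕ) + 2 = r i := Iff.rfl
lemma podRel_leg_inl (i : Fin m) (k : Fin (r i - 1)) (u : V) :
    podRel V r G x (leg i k) (.inl u) ↔ False := Iff.rfl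
lemma podRel_leg_ctr (i : Fin m) (k : Fin (r i - 1)) :
    podRel V r G x (leg i k) ctr ↔ False := Iff.rfl
lemma podRel_leg_leg (i : Fin m) (k : Fin (r i - 1)) (i' : Fin m) (k' : Fin (r i' - 1)) :
    podRel V r G x (leg i k) (leg i' k') ↔ (i = i' ∧ (k : ℕ) + 1 = (k' : ℕ)) := Iff.rfl


lemma ctr_ne_inl (u : V) : (ctr : podVerts V r) ≠ Sum.inl u := fun h => Sum.inr_ne_inl h
lemma leg_ne_inl (i : Fin m) (k : Fin (r i - 1)) (u : V) :
    (leg i k : podVerts V r) ≠ Sum.inl u := fun h => Sum.inr_ne_inl h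
lemma ctr_ne_leg (i : Fin m) (k : Fin (r i - 1)) : (ctr : podVerts V r) ≠ leg i k :=
  fun h => Sum.inl_ne_inr (Sum.inr_injective h)
lemma leg_inj_fst {i i' : Fin m} {k : Fin (r i - 1)} {k' : Fin (r i' - 1)}
    (h : (leg i k : podVerts V r) = leg i' k') : i = i' := by
  have h2 := Sum.inr_injective (Sum.inr_injective h)
  exact congrArg Sigma.fst h2

lemma adj_inl_inl {u v : V} :
    (podGraph V r G x).Adj (.inl u) (.inl v) ↔ G.Adj u v := by
  rw [podGraph, fromRel_adj]
  constructor
  · rintro ⟨hne, h | h⟩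
    · exact h
    · exact h.symm
  · intro h
    exact ⟨fun he => h.ne (Sum.inl_injective he), Or.inl h⟩

lemma adj_ctr {u : podVerts V r} (h : (podGraph V r G x).Adj ctr u) :
    ∃ i, (r i = 1 ∧ u = .inl (x i)) ∨ ∃ k, u = leg i k ∧ (k : ℕ) + 2 = r i := by
  rw [podGraph, fromRel_adj] at h
  obtain ⟨hne, h⟩ := h
  rcases u with s | u
  · rcases h with h | h
    · exact absurd h (podRel_ctr_inl s).mp
    · obtain ⟨i, h1, h2⟩ := (podRel_inl_ctr s).mp h
      exact ⟨i, Or.inl ⟨h1, by rw [h2]⟩⟩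
  · rcases u with ⟨⟩ | ⟨i, k⟩
    · exact absurd rfl hne
    · rcases h with h | h
      · exact ⟨i, Or.inr ⟨k, rfl, (podRel_ctr_leg i k).mp h⟩⟩
      · exact absurd h (podRel_leg_ctr i k).mp

lemma adj_leg {i : Fin m} {k : Fin (r i - 1)} {u : podVerts V r}
    (h : (podGraph V r G x).Adj (leg i k) u) :
    (u = .inl (x i) ∧ (k : ℕ) = 0) ∨ (u = ctr ∧ (k : ℕ) + 2 = r i) ∨
      ∃ k' : Fin (r i - 1), u = leg i k' ∧ ((k' : ℕ) + 1 = (k : ℕ) ∨ (k : ℕ) + 1 = (k' : ℕ)) := by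
  rw [podGraph, fromRel_adj] at h
  obtain ⟨hne, h⟩ := h
  rcases u with s | u
  · left
    rcases h with h | h
    · exact absurd h (podRel_leg_inl i k s).mp
    · obtain ⟨h1, h2⟩ := (podRel_inl_leg s i k).mp h
      exact ⟨by rw [h1], h2⟩
  · rcases u with ⟨⟩ | ⟨i', k'⟩
    · right; left
      rcases h with h | h
      · exact absurd h (podRel_leg_ctr i k).mp
      · exact ⟨rfl, (podRel_ctr_leg i k).mp h⟩
    · right; right
      rcases h with h | h
      · obtain ⟨rfl, hk⟩ := (podRel_leg_leg i k i' k').mp h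
        exact ⟨k', rfl, Or.inr hk⟩
      · obtain ⟨heq, hk⟩ := (podRel_leg_leg i' k' i k).mp h
        subst heq
        exact ⟨k', rfl, Or.inl hk⟩

lemma lift (N : ℕ) : ∀ {s t : V} (w : (podGraph V r G x).Walk (.inl s) (.inl t)),
    w.length ≤ N → (∀ v ∈ w.support, ∃ u : V, v = Sum.inl u) →
    ∃ w' : G.Walk s t, w'.length = w.length ∧ w'.support.map Sum.inl = w.support ∧
      w'.edges.map (Sym2.map Sum.inl) = w.edges := by
  induction N with
  | zero =>
    intro s t w hlen hall
    cases w with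
    | nil => exact ⟨Walk.nil, by simp⟩
    | cons h q => simp [Walk.length_cons] at hlen
  | succ N IH =>
    intro s t w hlen hall
    cases w with
    | nil => exact ⟨Walk.nil, by simp⟩
    | @cons _ u _ h q =>
      obtain ⟨u', rfl⟩ := hall u (by simp [Walk.support_cons])
      have hG : G.Adj s u' := adj_inl_inl.mp h
      have hlen' : q.length ≤ N := by
        rw [Walk.length_cons] at hlen; omega
      obtain ⟨q', h1, h2, h3⟩ := IH q hlen'
        (fun v hv => hall v (by rw [Walk.support_cons]; exact List.mem_cons_of_mem _ hv))
      refine ⟨Walk.cons hG q', ?_, ?_, ?_⟩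
      · rw [Walk.length_cons, Walk.length_cons, h1]
      · rw [Walk.support_cons, Walk.support_cons, ← h2]; simp
      · rw [Walk.edges_cons, Walk.edges_cons, ← h3]; simp


lemma mem_cons_support {u v t : podVerts V r} (h : (podGraph V r G x).Adj u v)
    (q : (podGraph V r G x).Walk v t) : v ∈ (Walk.cons h q).support := by
  rw [Walk.support_cons]
  exact List.mem_cons_of_mem _ q.start_mem_support

lemma descend {i : Fin m} :
    ∀ (k : ℕ) (hk : k < r i - 1) (t : podVerts V r)
      (q : (podGraph V r G x).Walk (leg i ⟨k, hk⟩) t),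
      q.support.Nodup → ctr ∉ q.support →
      (∀ k'' : Fin (r i - 1), k < (k'' : ℕ) → leg i k'' ∉ q.support) →
      (∀ k'' : Fin (r i - 1), t ≠ leg i k'') →
      ∃ q' : (podGraph V r G x).Walk (.inl (x i)) t,
        q.length = (k + 1) + q'.length ∧ q'.support <:+ q.support := by
  intro k
  induction k with
  | zero =>
    intro hk t q hnd hctr hup ht
    cases q with
    | nil => exact absurd rfl (ht ⟨0, hk⟩)
    | @cons _ u _ h q₀ =>
      rcases adj_leg h with ⟨rfl, -⟩ | ⟨rfl, -⟩ | ⟨k', rfl, hor⟩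
      · refine ⟨q₀, by rw [Walk.length_cons]; omega, ?_⟩
        rw [Walk.support_cons]
        exact List.suffix_cons _ _
      · exact absurd (mem_cons_support h q₀) hctr
      · exfalso
        rcases hor with h1 | h1
        · simp at h1
        · simp only [Fin.val_mk] at h1
          exact hup k' (by omega) (mem_cons_support h q₀)
  | succ k IH =>
    intro hk t q hnd hctr hup ht
    cases q with
    | nil => exact absurd rfl (ht ⟨k + 1, hk⟩)
    | @cons _ u _ h q₀ =>
      rcases adj_leg h with ⟨rfl, h0⟩ | ⟨rfl, -⟩ | ⟨k', rfl, hor⟩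
      · simp at h0
      · exact absurd (mem_cons_support h q₀) hctr
      · rcases hor with h1 | h1
        · -- going down
          simp only [Fin.val_mk] at h1
          have hkk : k < r i - 1 := by omega
          have heq : k' = (⟨k, hkk⟩ : Fin (r i - 1)) := Fin.ext (by show (k' : ℕ) = k; omega)
          subst heq
          have hnd₀ : q₀.support.Nodup := by
            rw [Walk.support_cons, List.nodup_cons] at hnd
            exact hnd.2
          have hhead : leg i ⟨k + 1, hk⟩ ∉ q₀.support := by
            rw [Walk.support_cons, List.nodup_cons] at hnd
            exact hnd.1
          have hctr₀ : ctr ∉ q₀.support := fun hc => hctr (by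
            rw [Walk.support_cons]; exact List.mem_cons_of_mem _ hc)
          have hup₀ : ∀ k'' : Fin (r i - 1), k < (k'' : ℕ) → leg i k'' ∉ q₀.support := by
            intro k'' hgt hmem
            by_cases hke : (k'' : ℕ) = k + 1
            · have : k'' = (⟨k + 1, hk⟩ : Fin (r i - 1)) := Fin.ext (by simpa using hke)
              rw [this] at hmem
              exact hhead hmem
            · exact hup k'' (by omega) (by
                rw [Walk.support_cons]; exact List.mem_cons_of_mem _ hmem)
          obtain ⟨q', hq1, hq2⟩ := IH hkk t q₀ hnd₀ hctr₀ hup₀ ht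
          refine ⟨q', by rw [Walk.length_cons]; omega, ?_⟩
          exact hq2.trans (by rw [Walk.support_cons]; exact List.suffix_cons _ _)
        · -- going up: contradiction
          exfalso
          simp only [Fin.val_mk] at h1
          exact hup k' (by omega) (mem_cons_support h q₀)

lemma descend_top {i : Fin m} {v t : podVerts V r}
    (hv : (r i = 1 ∧ v = .inl (x i)) ∨ ∃ k, v = leg i k ∧ (k : ℕ) + 2 = r i)
    (M : (podGraph V r G x).Walk v t) (hnd : M.support.Nodup) (hctr : ctr ∉ M.support)
    (ht : ∀ k'' : Fin (r i - 1), t ≠ leg i k'') :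
    ∃ M' : (podGraph V r G x).Walk (.inl (x i)) t,
      M.length + 1 = r i + M'.length ∧ M'.support <:+ M.support := by
  rcases hv with ⟨hr1, rfl⟩ | ⟨k, rfl, hk2⟩
  · exact ⟨M, by omega, List.suffix_refl _⟩
  · have hup : ∀ k'' : Fin (r i - 1), (k : ℕ) < (k'' : ℕ) → leg i k'' ∉ M.support := by
      intro k'' hgt _
      exact absurd k''.isLt (by omega)
    obtain ⟨M', h1, h2⟩ := descend (k : ℕ) k.isLt t M hnd hctr hup ht
    exact ⟨M', by omega, h2⟩

/-- A nodup walk between two old vertices avoiding the center contains no leg vertex. -/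
lemma no_leg {s t : V} (q : (podGraph V r G x).Walk (.inl s) (.inl t))
    (hnd : q.support.Nodup) (hctr : ctr ∉ q.support) (i : Fin m) (k : Fin (r i - 1)) :
    leg i k ∉ q.support := by
  classical
  by_contra hmem
  -- maximal leg-i vertex on q
  have hSne : (Finset.univ.filter (fun k' : Fin (r i - 1) => leg i k' ∈ q.support)).Nonempty :=
    ⟨k, by simp [hmem]⟩
  set kmax := (Finset.univ.filter
    (fun k' : Fin (r i - 1) => leg i k' ∈ q.support)).max' hSne with hkmaxdef
  have hkmem : leg i kmax ∈ q.support := by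
    have := Finset.max'_mem _ hSne
    simpa using this
  have hmax : ∀ k' : Fin (r i - 1), leg i k' ∈ q.support → k' ≤ kmax := by
    intro k' h'
    exact Finset.le_max' _ _ (by simp [h'])
  set v := leg i kmax with hvdef
  -- neighbours of v on q are forced
  have opt : ∀ u', (podGraph V r G x).Adj v u' → u' ∈ q.support →
      ((kmax : ℕ) = 0 ∧ u' = .inl (x i)) ∨
        ∃ k' : Fin (r i - 1), u' = leg i k' ∧ (k' : ℕ) + 1 = (kmax : ℕ) := by
    intro u' hadj hmem'
    rcases adj_leg hadj with ⟨rfl, h0⟩ | ⟨rfl, -⟩ | ⟨k', rfl, hor⟩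
    · exact Or.inl ⟨h0, rfl⟩
    · exact absurd hmem' hctr
    · rcases hor with h1 | h1
      · exact Or.inr ⟨k', rfl, h1⟩
      · exfalso
        have := hmax k' hmem'
        rw [Fin.le_def] at this
        omega
  -- split the walk at v
  have hspec := q.take_spec hkmem
  have hsupp : q.support = (q.takeUntil v hkmem).support ++ (q.dropUntil v hkmem).support.tail := by
    conv_lhs => rw [← hspec]
    rw [Walk.support_append]
  have hdisj : List.Disjoint (q.takeUntil v hkmem).support (q.dropUntil v hkmem).support.tail := by
    rw [hsupp] at hnd
    exact List.disjoint_of_nodup_append hnd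
  -- the predecessor
  have htknn : ¬ (q.takeUntil v hkmem).reverse.Nil := by
    intro hnil
    rw [Walk.nil_iff_length_eq, Walk.length_reverse, ← Walk.nil_iff_length_eq] at hnil
    rw [Walk.nil_iff_support_eq] at hnil
    have := (q.takeUntil v hkmem).end_mem_support
    rw [hnil] at this
    simp only [List.mem_singleton] at this
    exact leg_ne_inl i kmax s this
  obtain ⟨u₁, h₁, tt, htt⟩ := Walk.not_nil_iff.mp htknn
  have hu₁tk : u₁ ∈ (q.takeUntil v hkmem).support := by
    have : u₁ ∈ (q.takeUntil v hkmem).reverse.support := by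
      rw [htt]
      exact mem_cons_support h₁ tt
    rwa [Walk.support_reverse, List.mem_reverse] at this
  -- the successor
  have hdrnn : ¬ (q.dropUntil v hkmem).Nil := by
    intro hnil
    rw [Walk.nil_iff_support_eq] at hnil
    have := (q.dropUntil v hkmem).end_mem_support
    rw [hnil] at this
    simp only [List.mem_singleton] at this
    exact leg_ne_inl i kmax t this.symm
  obtain ⟨u₂, h₂, dd, hdd⟩ := Walk.not_nil_iff.mp hdrnn
  have hu₂dr : u₂ ∈ (q.dropUntil v hkmem).support.tail := by
    rw [hdd, Walk.support_cons]
    exact dd.start_mem_support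
  have hne : u₁ ≠ u₂ := fun he => hdisj hu₁tk (he ▸ hu₂dr)
  have hu₁q : u₁ ∈ q.support := q.support_takeUntil_subset hkmem hu₁tk
  have hu₂q : u₂ ∈ q.support := by
    rw [hsupp]
    exact List.mem_append_right _ hu₂dr
  rcases opt u₁ h₁ hu₁q with ⟨hk0, rfl⟩ | ⟨k₁, rfl, hk₁⟩ <;>
    rcases opt u₂ h₂ hu₂q with ⟨hk0', rfl⟩ | ⟨k₂, rfl, hk₂⟩
  · exact hne rfl
  · omega
  · omega
  · exact hne (by rw [show k₁ = k₂ from Fin.ext (by omega)])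

/-- If a cycle avoids the center it contains no leg vertex. -/
lemma ctr_mem {a : podVerts V r} (w : (podGraph V r G x).Walk a a) (hw : w.IsCycle)
    {i : Fin m} {k : Fin (r i - 1)} (hmem : leg i k ∈ w.support)
    (hctr : ctr ∉ w.support) : False := by
  classical
  have hSne : (Finset.univ.filter (fun k' : Fin (r i - 1) => leg i k' ∈ w.support)).Nonempty :=
    ⟨k, by simp [hmem]⟩
  set kmax := (Finset.univ.filter
    (fun k' : Fin (r i - 1) => leg i k' ∈ w.support)).max' hSne with hkmaxdef
  have hkmem : leg i kmax ∈ w.support := by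
    have := Finset.max'_mem _ hSne
    simpa using this
  have hmax : ∀ k' : Fin (r i - 1), leg i k' ∈ w.support → k' ≤ kmax := by
    intro k' h'
    exact Finset.le_max' _ _ (by simp [h'])
  set v := leg i kmax with hvdef
  set wv := w.rotate v hkmem with hwvdef
  have hcyc : wv.IsCycle := hw.rotate hkmem
  have hctr' : ctr ∉ wv.support := fun hc =>
    hctr (mem_support_rotate w hkmem (ctr_ne_leg i kmax) hc)
  obtain ⟨u₁, h₁, t₁, ht₁⟩ := Walk.not_nil_iff.mp hcyc.not_nil
  have hlen3 : 3 ≤ wv.length := hcyc.three_le_length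
  have ht₁len : t₁.length + 1 = wv.length := by rw [ht₁, Walk.length_cons]
  have ht₁nn : ¬ t₁.reverse.Nil := by
    rw [Walk.nil_iff_length_eq, Walk.length_reverse]
    omega
  obtain ⟨u₂, h₂, t₂, ht₂⟩ := Walk.not_nil_iff.mp ht₁nn
  -- u₁ ≠ u₂, via the trail property
  have hne : u₁ ≠ u₂ := by
    intro he
    have hedges : wv.edges = s(v, u₁) :: t₁.edges := by rw [ht₁, Walk.edges_cons]
    have hnd := hcyc.isCircuit.isTrail.edges_nodup
    rw [hedges, List.nodup_cons] at hnd
    have hmem2 : s(v, u₂) ∈ t₁.edges := by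
      have h3 : t₁ = (Walk.cons h₂ t₂).reverse := by rw [← ht₂, Walk.reverse_reverse]
      rw [h3, Walk.edges_reverse, Walk.edges_cons]
      simp
    rw [← he] at hmem2
    exact hnd.1 hmem2
  have hu₁wv : u₁ ∈ wv.support := by
    rw [ht₁]
    exact mem_cons_support h₁ t₁
  have hu₂wv : u₂ ∈ wv.support := by
    have : u₂ ∈ t₁.reverse.support := by
      rw [ht₂]
      exact mem_cons_support h₂ t₂
    rw [Walk.support_reverse, List.mem_reverse] at this
    rw [ht₁, Walk.support_cons]
    exact List.mem_cons_of_mem _ this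
  have hu₁w : u₁ ∈ w.support := mem_support_rotate w hkmem h₁.ne' hu₁wv
  have hu₂w : u₂ ∈ w.support := mem_support_rotate w hkmem h₂.ne' hu₂wv
  have opt : ∀ u', (podGraph V r G x).Adj v u' → u' ∈ w.support →
      ((kmax : ℕ) = 0 ∧ u' = .inl (x i)) ∨
        ∃ k' : Fin (r i - 1), u' = leg i k' ∧ (k' : ℕ) + 1 = (kmax : ℕ) := by
    intro u' hadj hmem'
    rcases adj_leg hadj with ⟨rfl, h0⟩ | ⟨rfl, -⟩ | ⟨k', rfl, hor⟩
    · exact Or.inl ⟨h0, rfl⟩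
    · exact absurd hmem' hctr
    · rcases hor with h1 | h1
      · exact Or.inr ⟨k', rfl, h1⟩
      · exfalso
        have := hmax k' hmem'
        rw [Fin.le_def] at this
        omega
  rcases opt u₁ h₁ hu₁w with ⟨hk0, rfl⟩ | ⟨k₁, rfl, hk₁⟩ <;>
    rcases opt u₂ h₂ hu₂w with ⟨hk0', rfl⟩ | ⟨k₂, rfl, hk₂⟩
  · exact hne rfl
  · omega
  · omega
  · exact hne (by rw [show k₁ = k₂ from Fin.ext (by omega)])

end Pod

end PodAux

/-- Let `G` be a bipartite graph (with type function `c`) of girth `≥ 2n`,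
and let `Δ₁, …, Δ_m` (edges `{a i, b i}`) be pairwise antipodal edges: the minimal distance
between vertices of distinct `Δᵢ, Δⱼ` is exactly `n-1`. Let `r₁, …, r_m` be positive
integers with `rᵢ + rⱼ ≥ n` for `i ≠ j`. Then the graph obtained from `G` by attaching an
`m`-pod with bases `Δ₁, …, Δ_m` and legs of lengths `r₁, …, r_m` — with leg endpoints
`x i ∈ Δᵢ` chosen by the parity condition `type(x i) = l + rᵢ (mod 2)` making the new graph
bipartite — still has girth at least `2n`. -/
theorem podGraph_girth (V : Type*) (G : SimpleGraph V) (n : ℕ) (hn : 2 ≤ n)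
    (c : V → ZMod 2) (hbip : ∀ u v, G.Adj u v → c u ≠ c v)
    (hgirth : (2 * n : ℕ) ≤ G.egirth)
    (m : ℕ) (a b : Fin m → V) (hedge : ∀ i, G.Adj (a i) (b i))
    (hant : ∀ i j, i ≠ j →
      (∀ u v, (u = a i ∨ u = b i) → (v = a j ∨ v = b j) → ((n - 1 : ℕ) : ℕ∞) ≤ G.edist u v) ∧
      (∃ u v, (u = a i ∨ u = b i) ∧ (v = a j ∨ v = b j) ∧ G.edist u v = ((n - 1 : ℕ) : ℕ∞)))
    (r : Fin m → ℕ) (hr : ∀ i, 0 < r i) (hrr : ∀ i j, i ≠ j → n ≤ r i + r j)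
    (x : Fin m → V) (hx : ∀ i, x i = a i ∨ x i = b i)
    (l : ZMod 2) (hxt : ∀ i, c (x i) = l + (r i : ZMod 2)) :
    (2 * n : ℕ) ≤ (podGraph V r G x).egirth := by
  classical
  rw [SimpleGraph.le_egirth]
  intro v₀ w hw
  by_cases hall : ∀ v ∈ w.support, ∃ u : V, v = Sum.inl u
  · -- the cycle lives in the old graph
    obtain ⟨s, rfl⟩ := hall v₀ w.start_mem_support
    obtain ⟨w', hlen, hsup, hedg⟩ := PodAux.lift w.length w le_rfl hall
    have hcyc : w'.IsCycle := by
      refine ⟨⟨⟨?_⟩, ?_⟩, ?_⟩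
      · have := hw.isCircuit.isTrail.edges_nodup
        rw [← hedg] at this
        exact this.of_map _
      · intro h
        rw [h] at hlen
        have := hw.three_le_length
        simp only [SimpleGraph.Walk.length_nil] at hlen
        omega
      · have := hw.support_nodup
        rw [← hsup] at this
        rw [← List.map_tail] at this
        exact this.of_map _
    have h1 : G.egirth ≤ w'.length := SimpleGraph.le_egirth.mp le_rfl s w' hcyc
    refine le_trans (le_trans hgirth h1) ?_
    rw [hlen]
  · -- the cycle uses a new vertex; it must pass through the center
    rcases Classical.not_forall.mp hall with ⟨y₀, hy⟩
    rw [Classical.not_imp] at hy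
    obtain ⟨hy₀mem, hy₀⟩ := hy
    have hctrmem : PodAux.ctr ∈ w.support := by
      rcases y₀ with s | y₀
      · exact absurd ⟨s, rfl⟩ hy₀
      rcases y₀ with ⟨⟩ | ⟨i, k⟩
      · exact hy₀mem
      · by_contra hc
        exact PodAux.ctr_mem w hw (hmem := hy₀mem) hc
    set wz := w.rotate PodAux.ctr hctrmem with hwzdef
    have hcyc : wz.IsCycle := hw.rotate hctrmem
    have hlenz : wz.length = w.length := PodAux.my_length_rotate w hctrmem
    obtain ⟨v₁, h₁, q₁, hq₁⟩ := SimpleGraph.Walk.not_nil_iff.mp hcyc.not_nil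
    have hq₁nd : q₁.support.Nodup := by
      have := hcyc.support_nodup
      rw [hq₁, SimpleGraph.Walk.support_cons] at this
      simpa using this
    obtain ⟨v₂, h₂, q₂, hq₂⟩ := SimpleGraph.Walk.not_nil_iff.mp
      (show ¬ q₁.reverse.Nil by
        rw [SimpleGraph.Walk.nil_iff_length_eq, SimpleGraph.Walk.length_reverse,
          ← SimpleGraph.Walk.nil_iff_length_eq]
        intro hnil
        rw [SimpleGraph.Walk.nil_iff_support_eq] at hnil
        have := q₁.end_mem_support
        rw [hnil] at this
        simp only [List.mem_singleton] at this
        exact h₁.ne' this.symm)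
    -- h₂ : Adj ctr v₂, q₂ : Walk v₂ v₁
    have hrevnd : (PodAux.ctr :: q₂.support).Nodup := by
      rw [← SimpleGraph.Walk.support_cons (h := h₂), ← hq₂, SimpleGraph.Walk.support_reverse]
      exact List.nodup_reverse.mpr hq₁nd
    have hq₂nd : q₂.support.Nodup := (List.nodup_cons.mp hrevnd).2
    have hq₂ctr : PodAux.ctr ∉ q₂.support := (List.nodup_cons.mp hrevnd).1
    obtain ⟨i, hv₁⟩ := PodAux.adj_ctr h₁
    obtain ⟨j, hv₂⟩ := PodAux.adj_ctr h₂
    -- length bookkeeping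
    have hlen₁ : wz.length = q₁.length + 1 := by rw [hq₁, SimpleGraph.Walk.length_cons]
    have hlen₂ : q₁.length = q₂.length + 1 := by
      have := congrArg SimpleGraph.Walk.length hq₂
      rw [SimpleGraph.Walk.length_reverse, SimpleGraph.Walk.length_cons] at this
      omega
    have hij : i ≠ j := by
      rintro rfl
      have hveq : v₁ = v₂ := by
        rcases hv₁ with ⟨h1a, rfl⟩ | ⟨k1, rfl, hk1⟩ <;>
          rcases hv₂ with ⟨h2a, rfl⟩ | ⟨k2, rfl, hk2⟩
        · rfl
        · omega
        · omega
        · rw [show k1 = k2 from Fin.ext (by omega)]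
      subst hveq
      have := PodAux.loop_eq_nil q₂ hq₂nd
      have hq₂len : q₂.length = 0 := by rw [this]; rfl
      have := hcyc.three_le_length
      omega
    -- first descent
    have hMnd : q₂.reverse.support.Nodup := by
      rw [SimpleGraph.Walk.support_reverse]; exact List.nodup_reverse.mpr hq₂nd
    have hMctr : PodAux.ctr ∉ q₂.reverse.support := by
      rw [SimpleGraph.Walk.support_reverse, List.mem_reverse]; exact hq₂ctr
    have htv₂ : ∀ k'' : Fin (r i - 1), v₂ ≠ PodAux.leg i k'' := by
      intro k'' he
      rcases hv₂ with ⟨-, rfl⟩ | ⟨k2, rfl, -⟩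
      · exact PodAux.leg_ne_inl i k'' (x j) he.symm
      · exact hij (PodAux.leg_inj_fst he).symm
    obtain ⟨M₁, hM₁len, hM₁suf⟩ := PodAux.descend_top hv₁ q₂.reverse hMnd hMctr htv₂
    have hM₁nd : M₁.support.Nodup := hM₁suf.sublist.nodup hMnd
    have hM₁ctr : PodAux.ctr ∉ M₁.support := fun hc => hMctr (hM₁suf.subset hc)
    -- second descent, along the reversed walk
    have hM₁rnd : M₁.reverse.support.Nodup := by
      rw [SimpleGraph.Walk.support_reverse]; exact List.nodup_reverse.mpr hM₁nd
    have hM₁rctr : PodAux.ctr ∉ M₁.reverse.support := by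
      rw [SimpleGraph.Walk.support_reverse, List.mem_reverse]; exact hM₁ctr
    have htinl : ∀ k'' : Fin (r j - 1), (Sum.inl (x i) : podVerts V r) ≠ PodAux.leg j k'' :=
      fun k'' he => PodAux.leg_ne_inl j k'' (x i) he.symm
    obtain ⟨M₂, hM₂len, hM₂suf⟩ := PodAux.descend_top hv₂ M₁.reverse hM₁rnd hM₁rctr htinl
    have hM₂nd : M₂.support.Nodup := hM₂suf.sublist.nodup hM₁rnd
    have hM₂ctr : PodAux.ctr ∉ M₂.support := fun hc => hM₁rctr (hM₂suf.subset hc)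
    -- the middle walk lives in the old graph
    have hallinl : ∀ v ∈ M₂.support, ∃ u : V, v = Sum.inl u := by
      intro v hv
      rcases v with s | v
      · exact ⟨s, rfl⟩
      rcases v with ⟨⟩ | ⟨i', k'⟩
      · exact absurd hv hM₂ctr
      · exact absurd hv (PodAux.no_leg M₂ hM₂nd hM₂ctr i' k')
    obtain ⟨w', hw'len, -, -⟩ := PodAux.lift M₂.length M₂ le_rfl hallinl
    -- distance bound
    have hdist : ((n - 1 : ℕ) : ℕ∞) ≤ (w'.length : ℕ∞) :=
      le_trans ((hant j i (Ne.symm hij)).1 (x j) (x i) (hx j) (hx i)) (G.edist_le w')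
    have hdist' : n - 1 ≤ w'.length := by exact_mod_cast hdist
    -- parity
    have hpar : (w'.length : ZMod 2) = ((r i + r j : ℕ) : ZMod 2) := by
      rw [PodAux.walk_parity c hbip w', hxt i, hxt j]
      push_cast
      have hl2 : l + l = 0 := by
        have : ∀ z : ZMod 2, z + z = 0 := by decide
        exact this l
      linear_combination hl2
    have hpar' : w'.length % 2 = (r i + r j) % 2 :=
      (ZMod.natCast_eq_natCast_iff' _ _ _).mp hpar
    -- assemble
    have hM₁rlen : M₁.reverse.length = M₁.length := SimpleGraph.Walk.length_reverse M₁
    have hq₂rlen : q₂.reverse.length = q₂.length := SimpleGraph.Walk.length_reverse q₂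
    have hri : 0 < r i := hr i
    have hrj : 0 < r j := hr j
    have hsum : n ≤ r i + r j := hrr i j hij
    have hfinal : 2 * n ≤ w.length := by omega
    exact_mod_cast Nat.cast_le.mpr hfinal
end

section
/- Let X be a thick rank-2 spherical building with Weyl group I₂(n) (equivalently, a bipartite graph of girth exactly 2n, diameter n, every vertex of valence ≥ 3). Let Δ₁, Δ₂ be antipodal chambers (edges at combinatorial distance n-1), and let r₁, r₂ ≥ 0 be integers with r₁ + r₂ = n-1. Then the intersection B_{r₁}(Δ₁) ∩ B_{r₂}(Δ₂) of combinatorial balls consists of exactly two vertices, one of each type. -/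
/-- The combinatorial ball of radius `r` around the edge `{a, b}`: all vertices within
extended distance `r` of one of the endpoints. -/
def edgeBall {V : Type*} (G : SimpleGraph V) (a b : V) (r : ℕ) : Set V :=
  {w | min (G.edist w a) (G.edist w b) ≤ (r : ℕ∞)}

open SimpleGraph Walk


private lemma zmod2_succ : ∀ a b : ZMod 2, a ≠ b → b = a + 1 := by decide

private lemma walk_parity {V : Type*} {G : SimpleGraph V} (c : V → ZMod 2)
    (hbip : ∀ u v, G.Adj u v → c u ≠ c v) :
    ∀ {u v : V} (p : G.Walk u v), c v = c u + (p.length : ZMod 2) := by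
  intro u v p
  induction p with
  | nil => simp
  | @cons u u' v h p ih =>
    have h1 : c u' = c u + 1 := zmod2_succ _ _ (hbip _ _ h)
    rw [Walk.length_cons, ih, h1]
    push_cast
    ring

private lemma edist_parity {V : Type*} {G : SimpleGraph V} (c : V → ZMod 2)
    (hbip : ∀ u v, G.Adj u v → c u ≠ c v) {u v : V} {k : ℕ}
    (h : G.edist u v = (k : ℕ∞)) : c v = c u + (k : ZMod 2) := by
  obtain ⟨p, hp⟩ := exists_walk_of_edist_eq_coe h
  rw [← hp]
  exact walk_parity c hbip p

private lemma enat_squeeze {a b : ℕ∞} {r s : ℕ} (ha : a ≤ (r : ℕ∞)) (hb : b ≤ (s : ℕ∞))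
    (h : ((r + s : ℕ) : ℕ∞) ≤ a + b) : a = (r : ℕ∞) ∧ b = (s : ℕ∞) := by
  lift a to ℕ using (ha.trans_lt (ENat.coe_lt_top r)).ne
  lift b to ℕ using (hb.trans_lt (ENat.coe_lt_top s)).ne
  have ha' : a ≤ r := by exact_mod_cast ha
  have hb' : b ≤ s := by exact_mod_cast hb
  have h' : r + s ≤ a + b := by exact_mod_cast h
  constructor <;> exact_mod_cast by omega

private lemma exists_mid {V : Type*} {G : SimpleGraph V} :
    ∀ (r : ℕ) (s : ℕ) {x y : V}, G.edist x y = ((r + s : ℕ) : ℕ∞) →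
      ∃ w, G.edist x w = (r : ℕ∞) ∧ G.edist w y = (s : ℕ∞) := by
  intro r
  induction r with
  | zero =>
    intro s x y h
    exact ⟨x, by simp, by simpa using h⟩
  | succ r ih =>
    intro s x y h
    obtain ⟨p, hp⟩ := exists_walk_of_edist_eq_coe h
    cases p with
    | nil => simp at hp; omega
    | @cons _ u _ hadj q =>
      have hq : q.length = r + s := by
        rw [Walk.length_cons] at hp; omega
      have h1 : G.edist u y ≤ ((r + s : ℕ) : ℕ∞) := by
        rw [← hq]; exact edist_le q
      have hxu : G.edist x u ≤ (1 : ℕ∞) := by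
        simpa using edist_le hadj.toWalk
      have h2 : G.edist u y = ((r + s : ℕ) : ℕ∞) := by
        lift G.edist u y to ℕ using (h1.trans_lt (ENat.coe_lt_top _)).ne with m hm
        have hle : m ≤ r + s := by exact_mod_cast h1
        have htri : G.edist x y ≤ G.edist x u + G.edist u y := SimpleGraph.edist_triangle
        rw [h, ← hm] at htri
        have : ((r + 1 + s : ℕ) : ℕ∞) ≤ 1 + (m : ℕ∞) := htri.trans (add_le_add hxu le_rfl)
        have : r + 1 + s ≤ 1 + m := by exact_mod_cast this
        congr 1
        omega
      obtain ⟨w, hw1, hw2⟩ := ih s h2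
      refine ⟨w, ?_, hw2⟩
      have hle : G.edist x w ≤ ((r + 1 : ℕ) : ℕ∞) := by
        have := (SimpleGraph.edist_triangle (G := G) (u := x) (v := u) (w := w)).trans
          (add_le_add hxu hw1.le)
        refine this.trans ?_
        rw [← Nat.cast_one, ← Nat.cast_add]
        exact_mod_cast le_of_eq (by omega)
      lift G.edist x w to ℕ using (hle.trans_lt (ENat.coe_lt_top _)).ne with m hm
      have hle' : m ≤ r + 1 := by exact_mod_cast hle
      have htri : G.edist x y ≤ G.edist x w + G.edist w y := SimpleGraph.edist_triangle
      rw [h, ← hm, hw2] at htri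
      have : r + 1 + s ≤ m + s := by exact_mod_cast htri
      congr 1
      omega

private lemma isPath_of_length_eq_edist {V : Type*} [DecidableEq V] {G : SimpleGraph V} {x y : V}
    (p : G.Walk x y) (h : (p.length : ℕ∞) = G.edist x y) : p.IsPath := by
  have h1 : G.edist x y ≤ (p.bypass.length : ℕ∞) := edist_le _
  rw [← h] at h1
  have h2 : p.length ≤ p.bypass.length := by exact_mod_cast h1
  have h3 := p.bypass_eq_self_of_length_le h2
  rw [← h3]
  exact p.bypass_isPath

private lemma exists_cycle_of_paths {V : Type*} [DecidableEq V] {G : SimpleGraph V} :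
    ∀ (k : ℕ) {x y : V} (p q : G.Walk x y), p.length + q.length ≤ k →
      p.IsPath → q.IsPath → p ≠ q →
      ∃ (z : V) (cw : G.Walk z z), cw.IsCycle ∧ cw.length ≤ p.length + q.length := by
  intro k
  induction k with
  | zero =>
    intro x y p q hk hp hq hne
    exfalso
    have hp0 : p.length = 0 := by omega
    have hq0 : q.length = 0 := by omega
    have hxy : x = y := Walk.eq_of_length_eq_zero hp0
    subst hxy
    rw [Walk.length_eq_zero_iff] at hp0 hq0
    exact hne ((Walk.nil_iff_eq_nil.mp hp0).trans (Walk.nil_iff_eq_nil.mp hq0).symm)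
  | succ k ih =>
    intro x y p q hk hp hq hne
    cases p with
    | nil =>
      cases q with
      | nil => exact absurd rfl hne
      | @cons _ u' _ h' q' =>
        exact absurd (Walk.end_mem_support q') ((Walk.cons_isPath_iff h' q').mp hq).2
    | @cons _ u _ h p' =>
      cases q with
      | nil =>
        exact absurd (Walk.end_mem_support p') ((Walk.cons_isPath_iff h p').mp hp).2
      | @cons _ u' _ h' q' =>
        rcases eq_or_ne u u' with rfl | huu'
        · by_cases hpq' : p' = q'
          · exact absurd (by rw [hpq']) hne
          · obtain ⟨z, cw, hcyc, hlen⟩ := ih p' q' (by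
                simp only [Walk.length_cons] at hk; omega)
              ((Walk.cons_isPath_iff h p').mp hp).1 ((Walk.cons_isPath_iff h' q').mp hq).1 hpq'
            exact ⟨z, cw, hcyc, by simp only [Walk.length_cons]; omega⟩
        · have hxp' : x ∉ p'.support := ((Walk.cons_isPath_iff h p').mp hp).2
          have hxq' : x ∉ q'.support := ((Walk.cons_isPath_iff h' q').mp hq).2
          set r := (p'.append q'.reverse).bypass with hr
          have hrpath : r.IsPath := Walk.bypass_isPath _
          have hxr : x ∉ r.support := by
            intro hmem
            have := Walk.support_bypass_subset _ hmem
            rcases (Walk.mem_support_append_iff _ _).mp this with hm | hm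
            · exact hxp' hm
            · rw [Walk.support_reverse, List.mem_reverse] at hm
              exact hxq' hm
          have hconc : (r.concat h'.symm).IsPath := by
            rw [← Walk.isPath_reverse_iff, Walk.reverse_concat]
            rw [Walk.cons_isPath_iff]
            refine ⟨hrpath.reverse, ?_⟩
            rw [Walk.support_reverse, List.mem_reverse]
            exact hxr
          have hedge : s(x, u) ∉ (r.concat h'.symm).edges := by
            rw [Walk.edges_concat]
            intro hmem
            rw [List.concat_eq_append, List.mem_append, List.mem_singleton] at hmem
            rcases hmem with hm | hm
            · exact hxr (Walk.fst_mem_support_of_mem_edges r hm)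
            · rcases Sym2.eq_iff.mp hm with ⟨h1, h2⟩ | ⟨h1, h2⟩
              · exact h'.ne h1
              · exact huu' h2
          refine ⟨x, Walk.cons h (r.concat h'.symm), ?_, ?_⟩
          · exact (Walk.cons_isCycle_iff _ h).mpr ⟨hconc, hedge⟩
          · have hrlen : r.length ≤ p'.length + q'.length := by
              have := Walk.length_bypass_le (p'.append q'.reverse)
              rwa [Walk.length_append, Walk.length_reverse] at this
            simp only [Walk.length_cons, Walk.length_concat]
            omega

private lemma unique_mid {V : Type*} {G : SimpleGraph V} {n : ℕ} (hn : 2 ≤ n)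
    (hgirth : G.egirth = (2 * n : ℕ)) {x y w w' : V} {r s : ℕ} (hrs : r + s = n - 1)
    (hxy : G.edist x y = ((n - 1 : ℕ) : ℕ∞))
    (h1 : G.edist x w = (r : ℕ∞)) (h2 : G.edist w y = (s : ℕ∞))
    (h1' : G.edist x w' = (r : ℕ∞)) (h2' : G.edist w' y = (s : ℕ∞)) : w = w' := by
  classical
  by_contra hne
  obtain ⟨p1, hp1⟩ := exists_walk_of_edist_eq_coe h1
  obtain ⟨p2, hp2⟩ := exists_walk_of_edist_eq_coe h2
  obtain ⟨q1, hq1⟩ := exists_walk_of_edist_eq_coe h1'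
  obtain ⟨q2, hq2⟩ := exists_walk_of_edist_eq_coe h2'
  set P := p1.append p2 with hP
  set Q := q1.append q2 with hQ
  have hPlen : P.length = n - 1 := by
    rw [hP, Walk.length_append, hp1, hp2]; omega
  have hQlen : Q.length = n - 1 := by
    rw [hQ, Walk.length_append, hq1, hq2]; omega
  have hPpath : P.IsPath := isPath_of_length_eq_edist P (by rw [hPlen, hxy])
  have hQpath : Q.IsPath := isPath_of_length_eq_edist Q (by rw [hQlen, hxy])
  have hw'P : w' ∉ P.support := by
    intro hmem
    rcases (Walk.mem_support_append_iff _ _).mp hmem with hm | hm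
    · obtain ⟨qa, ra, hqa⟩ := Walk.mem_support_iff_exists_append.mp hm
      have hlen : qa.length + ra.length = r := by
        rw [← hp1, hqa, Walk.length_append]
      have hge : (r : ℕ∞) ≤ (qa.length : ℕ∞) := h1' ▸ edist_le qa
      have hge' : r ≤ qa.length := by exact_mod_cast hge
      exact hne (Walk.eq_of_length_eq_zero (p := ra) (by omega)).symm
    · obtain ⟨qa, ra, hqa⟩ := Walk.mem_support_iff_exists_append.mp hm
      have hlen : qa.length + ra.length = s := by
        rw [← hp2, hqa, Walk.length_append]
      have hge : (s : ℕ∞) ≤ (ra.length : ℕ∞) := h2' ▸ edist_le ra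
      have hge' : s ≤ ra.length := by exact_mod_cast hge
      exact hne (Walk.eq_of_length_eq_zero (p := qa) (by omega))
  have hPQ : P ≠ Q := by
    intro hEq
    apply hw'P
    rw [hEq, hQ]
    exact (Walk.mem_support_append_iff _ _).mpr (Or.inl (Walk.end_mem_support q1))
  obtain ⟨z, cw, hcyc, hlen⟩ :=
    exists_cycle_of_paths (P.length + Q.length) P Q le_rfl hPpath hQpath hPQ
  have hg : ((2 * n : ℕ) : ℕ∞) ≤ (cw.length : ℕ∞) := le_egirth.mp hgirth.ge z cw hcyc
  have hg' : 2 * n ≤ cw.length := by exact_mod_cast hg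
  rw [hPlen, hQlen] at hlen
  omega

private lemma edgeBall_comm {V : Type*} (G : SimpleGraph V) (a b : V) (r : ℕ) :
    edgeBall G a b r = edgeBall G b a r := by
  unfold edgeBall
  ext w
  simp [min_comm]

private lemma aux_main {V : Type*} {G : SimpleGraph V} {n : ℕ} (hn : 2 ≤ n)
    {c : V → ZMod 2} (hbip : ∀ u v, G.Adj u v → c u ≠ c v)
    (hgirth : G.egirth = (2 * n : ℕ))
    {a₁ b₁ a₂ b₂ : V} (h₁ : G.Adj a₁ b₁)
    (e11 : G.edist a₁ a₂ = ((n - 1 : ℕ) : ℕ∞))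
    (e22 : G.edist b₁ b₂ = ((n - 1 : ℕ) : ℕ∞))
    (e12 : G.edist a₁ b₂ = (n : ℕ∞))
    (e21 : G.edist b₁ a₂ = (n : ℕ∞))
    {r₁ r₂ : ℕ} (hr : r₁ + r₂ = n - 1) :
    ∃ u v : V, u ≠ v ∧ c u ≠ c v ∧
      edgeBall G a₁ b₁ r₁ ∩ edgeBall G a₂ b₂ r₂ = {u, v} := by
  obtain ⟨u, hu1, hu2⟩ := exists_mid r₁ r₂ (by rw [hr]; exact e11)
  obtain ⟨v, hv1, hv2⟩ := exists_mid r₁ r₂ (by rw [hr]; exact e22)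
  have hcu : c u = c a₁ + (r₁ : ZMod 2) := edist_parity c hbip hu1
  have hcv : c v = c b₁ + (r₁ : ZMod 2) := edist_parity c hbip hv1
  have hcuv : c u ≠ c v := by
    rw [hcu, hcv]
    intro h
    exact hbip _ _ h₁ (add_right_cancel h)
  refine ⟨u, v, fun h => hcuv (by rw [h]), hcuv, ?_⟩
  ext w
  simp only [Set.mem_inter_iff, Set.mem_insert_iff, Set.mem_singleton_iff]
  constructor
  · rintro ⟨hw1, hw2⟩
    rw [edgeBall, Set.mem_setOf_eq, min_le_iff] at hw1 hw2
    rcases hw1 with hA | hB <;> rcases hw2 with hC | hD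
    · left
      have h3 : G.edist a₁ w = (r₁ : ℕ∞) ∧ G.edist w a₂ = (r₂ : ℕ∞) := by
        refine enat_squeeze (by rwa [G.edist_comm]) hC ?_
        rw [hr, e11.symm]
        exact SimpleGraph.edist_triangle
      exact unique_mid hn hgirth hr e11 h3.1 h3.2 hu1 hu2
    · exfalso
      have htri : G.edist a₁ b₂ ≤ G.edist a₁ w + G.edist w b₂ := SimpleGraph.edist_triangle
      rw [e12, G.edist_comm (u := a₁)] at htri
      have : (n : ℕ∞) ≤ ((r₁ + r₂ : ℕ) : ℕ∞) := by
        refine htri.trans ?_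
        push_cast
        exact add_le_add hA hD
      have : n ≤ r₁ + r₂ := by exact_mod_cast this
      omega
    · exfalso
      have htri : G.edist b₁ a₂ ≤ G.edist b₁ w + G.edist w a₂ := SimpleGraph.edist_triangle
      rw [e21, G.edist_comm (u := b₁)] at htri
      have : (n : ℕ∞) ≤ ((r₁ + r₂ : ℕ) : ℕ∞) := by
        refine htri.trans ?_
        push_cast
        exact add_le_add hB hC
      have : n ≤ r₁ + r₂ := by exact_mod_cast this
      omega
    · right
      have h3 : G.edist b₁ w = (r₁ : ℕ∞) ∧ G.edist w b₂ = (r₂ : ℕ∞) := by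
        refine enat_squeeze (by rwa [G.edist_comm]) hD ?_
        rw [hr, e22.symm]
        exact SimpleGraph.edist_triangle
      exact unique_mid hn hgirth hr e22 h3.1 h3.2 hv1 hv2
  · have hmem : ∀ z : V, G.edist a₁ z = (r₁ : ℕ∞) → G.edist z a₂ = (r₂ : ℕ∞) →
        z ∈ edgeBall G a₁ b₁ r₁ ∩ edgeBall G a₂ b₂ r₂ := by
      intro z hz1 hz2
      constructor
      · rw [edgeBall, Set.mem_setOf_eq, min_le_iff]
        left
        rw [G.edist_comm]
        exact hz1.le
      · rw [edgeBall, Set.mem_setOf_eq, min_le_iff]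
        left
        exact hz2.le
    have hmem' : ∀ z : V, G.edist b₁ z = (r₁ : ℕ∞) → G.edist z b₂ = (r₂ : ℕ∞) →
        z ∈ edgeBall G a₁ b₁ r₁ ∩ edgeBall G a₂ b₂ r₂ := by
      intro z hz1 hz2
      constructor
      · rw [edgeBall, Set.mem_setOf_eq, min_le_iff]
        right
        rw [G.edist_comm]
        exact hz1.le
      · rw [edgeBall, Set.mem_setOf_eq, min_le_iff]
        right
        exact hz2.le
    rintro (rfl | rfl)
    · exact hmem w hu1 hu2
    · exact hmem' w hv1 hv2

private lemma zmod2_ne_add_one : ∀ a : ZMod 2, a ≠ a + 1 := by decide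

/-- Let `X` be a thick rank-2 spherical building with Weyl group `I₂(n)`:
a bipartite graph (type function `c`) of girth exactly `2n`, diameter `n`, every vertex of
valence `≥ 3`. Let `Δ₁ = {a₁,b₁}`, `Δ₂ = {a₂,b₂}` be antipodal chambers (edges at
combinatorial distance `n-1`), and `r₁, r₂ ≥ 0` integers with `r₁ + r₂ = n-1`. Then
`B_{r₁}(Δ₁) ∩ B_{r₂}(Δ₂)` consists of exactly two vertices, one of each type. -/
theorem ball_inter_antipodal (V : Type*) (G : SimpleGraph V) (n : ℕ) (hn : 2 ≤ n)
    (c : V → ZMod 2) (hbip : ∀ u v, G.Adj u v → c u ≠ c v)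
    (hgirth : G.egirth = (2 * n : ℕ))
    (hdiam : ∀ u v : V, G.edist u v ≤ (n : ℕ∞))
    (hthick : ∀ v : V, ∃ w₁ w₂ w₃, w₁ ≠ w₂ ∧ w₁ ≠ w₃ ∧ w₂ ≠ w₃ ∧
      G.Adj v w₁ ∧ G.Adj v w₂ ∧ G.Adj v w₃)
    (a₁ b₁ a₂ b₂ : V) (h₁ : G.Adj a₁ b₁) (h₂ : G.Adj a₂ b₂)
    (hant : (∀ u v, (u = a₁ ∨ u = b₁) → (v = a₂ ∨ v = b₂) →
        ((n - 1 : ℕ) : ℕ∞) ≤ G.edist u v) ∧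
      (∃ u v, (u = a₁ ∨ u = b₁) ∧ (v = a₂ ∨ v = b₂) ∧ G.edist u v = ((n - 1 : ℕ) : ℕ∞)))
    (r₁ r₂ : ℕ) (hr : r₁ + r₂ = n - 1) :
    ∃ u v : V, u ≠ v ∧ c u ≠ c v ∧
      edgeBall G a₁ b₁ r₁ ∩ edgeBall G a₂ b₂ r₂ = {u, v} := by
  have hne : ∀ u v : V, G.edist u v ≠ ⊤ :=
    fun u v => ((hdiam u v).trans_lt (ENat.coe_lt_top n)).ne
  have hbnd : ∀ {u v : V} {d : ℕ}, (d : ℕ∞) = G.edist u v →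
      ((n - 1 : ℕ) : ℕ∞) ≤ G.edist u v → n - 1 ≤ d ∧ d ≤ n := by
    intro u v d hd hlow
    have hhigh := hdiam u v
    rw [← hd] at hlow hhigh
    exact ⟨by exact_mod_cast hlow, by exact_mod_cast hhigh⟩
  obtain ⟨d11, hd11⟩ : ∃ d : ℕ, (d : ℕ∞) = G.edist a₁ a₂ := by
    lift G.edist a₁ a₂ to ℕ using hne a₁ a₂ with d hd; exact ⟨d, rfl⟩
  obtain ⟨d12, hd12⟩ : ∃ d : ℕ, (d : ℕ∞) = G.edist a₁ b₂ := by
    lift G.edist a₁ b₂ to ℕ using hne a₁ b₂ with d hd; exact ⟨d, rfl⟩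
  obtain ⟨d21, hd21⟩ : ∃ d : ℕ, (d : ℕ∞) = G.edist b₁ a₂ := by
    lift G.edist b₁ a₂ to ℕ using hne b₁ a₂ with d hd; exact ⟨d, rfl⟩
  obtain ⟨d22, hd22⟩ : ∃ d : ℕ, (d : ℕ∞) = G.edist b₁ b₂ := by
    lift G.edist b₁ b₂ to ℕ using hne b₁ b₂ with d hd; exact ⟨d, rfl⟩
  have hb11 := hbnd hd11 (hant.1 a₁ a₂ (Or.inl rfl) (Or.inl rfl))
  have hb12 := hbnd hd12 (hant.1 a₁ b₂ (Or.inl rfl) (Or.inr rfl))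
  have hb21 := hbnd hd21 (hant.1 b₁ a₂ (Or.inr rfl) (Or.inl rfl))
  have hb22 := hbnd hd22 (hant.1 b₁ b₂ (Or.inr rfl) (Or.inr rfl))
  obtain ⟨hb11l, hb11r⟩ := hb11
  obtain ⟨hb12l, hb12r⟩ := hb12
  obtain ⟨hb21l, hb21r⟩ := hb21
  obtain ⟨hb22l, hb22r⟩ := hb22
  have p11 : c a₂ = c a₁ + (d11 : ZMod 2) := edist_parity c hbip hd11.symm
  have p12 : c b₂ = c a₁ + (d12 : ZMod 2) := edist_parity c hbip hd12.symm
  have p21 : c a₂ = c b₁ + (d21 : ZMod 2) := edist_parity c hbip hd21.symm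
  have p22 : c b₂ = c b₁ + (d22 : ZMod 2) := edist_parity c hbip hd22.symm
  have hab1 : c a₁ ≠ c b₁ := hbip _ _ h₁
  have hab2 : c a₂ ≠ c b₂ := hbip _ _ h₂
  have q1 : (d11 : ZMod 2) ≠ (d12 : ZMod 2) := fun h => hab2 (by rw [p11, p12, h])
  have q2 : (d11 : ZMod 2) ≠ (d21 : ZMod 2) := by
    intro h
    apply hab1
    have := p11.symm.trans p21
    rw [h] at this
    exact add_right_cancel this
  have q3 : (d12 : ZMod 2) ≠ (d22 : ZMod 2) := by
    intro h
    apply hab1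
    have := p12.symm.trans p22
    rw [h] at this
    exact add_right_cancel this
  rcases (by omega : d11 = n - 1 ∨ d11 = n) with h11 | h11
  · have h12 : d12 = n := by
      rcases (by omega : d12 = n - 1 ∨ d12 = n) with h' | h'
      · exact absurd (by rw [h11, h']) q1
      · exact h'
    have h21 : d21 = n := by
      rcases (by omega : d21 = n - 1 ∨ d21 = n) with h' | h'
      · exact absurd (by rw [h11, h']) q2
      · exact h'
    have h22 : d22 = n - 1 := by
      rcases (by omega : d22 = n - 1 ∨ d22 = n) with h' | h'
      · exact h'
      · exact absurd (by rw [h12, h']) q3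
    exact aux_main hn hbip hgirth h₁ (by rw [← hd11, h11]) (by rw [← hd22, h22])
      (by rw [← hd12, h12]) (by rw [← hd21, h21]) hr
  · have h12 : d12 = n - 1 := by
      rcases (by omega : d12 = n - 1 ∨ d12 = n) with h' | h'
      · exact h'
      · exact absurd (by rw [h11, h']) q1
    have h21 : d21 = n - 1 := by
      rcases (by omega : d21 = n - 1 ∨ d21 = n) with h' | h'
      · exact h'
      · exact absurd (by rw [h11, h']) q2
    have h22 : d22 = n := by
      rcases (by omega : d22 = n - 1 ∨ d22 = n) with h' | h'
      · exact absurd (by rw [h12, h']) q3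
      · exact h'
    obtain ⟨u, v, huv, hcuv, hset⟩ :=
      aux_main hn hbip hgirth h₁ (by rw [← hd12, h12]) (by rw [← hd21, h21])
        (by rw [← hd11, h11]) (by rw [← hd22, h22]) hr
    refine ⟨u, v, huv, hcuv, ?_⟩
    rw [← hset, edgeBall_comm G a₂ b₂]
end

section
/- Let X be a thick rank-2 spherical building with Weyl group I₂(n), and let Δ₁, Δ₂ be two chambers at combinatorial distance at most n-2 (non-antipodal). If r₁ + r₂ = n-1 with r₁, r₂ > 0, then B_{r₁}(Δ₁) ∩ B_{r₂}(Δ₂) contains vertices of both types. -/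
private lemma getVert_edist_bounds {V : Type*} {G : SimpleGraph V} {u v : V} (p : G.Walk u v)
    (i : ℕ) : G.edist u (p.getVert i) ≤ (i : ℕ∞) ∧
      G.edist (p.getVert i) v ≤ ((p.length - i : ℕ) : ℕ∞) := by
  induction p generalizing i with
  | nil => simp [SimpleGraph.Walk.getVert, SimpleGraph.edist_self]
  | @cons a b w h q ih =>
    cases i with
    | zero =>
      refine ⟨by simp [SimpleGraph.edist_self], ?_⟩
      simpa using (h.toWalk.append q).edist_le
    | succ i =>
      obtain ⟨ih1, ih2⟩ := ih i
      refine ⟨?_, ?_⟩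
      · rw [SimpleGraph.Walk.getVert_cons_succ]
        calc G.edist a (q.getVert i) ≤ G.edist a b + G.edist b (q.getVert i) :=
              SimpleGraph.edist_triangle
          _ ≤ 1 + (i : ℕ∞) := add_le_add
              (le_of_eq (SimpleGraph.edist_eq_one_iff_adj.mpr h)) ih1
          _ = ((i + 1 : ℕ) : ℕ∞) := by push_cast; ring
      · rw [SimpleGraph.Walk.getVert_cons_succ]
        simpa [SimpleGraph.Walk.length_cons, Nat.succ_sub_succ] using ih2

/-- Let `X` be a thick rank-2 spherical building with Weyl group `I₂(n)`:
a bipartite graph (type function `c`) of girth `2n`, diameter `n`, all vertex degrees `≥ 3`.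
Let `Δ₁ = {a₁,b₁}`, `Δ₂ = {a₂,b₂}` be two non-antipodal chambers (at combinatorial distance
at most `n-2`). If `r₁ + r₂ = n-1` with `r₁, r₂ > 0`, then `B_{r₁}(Δ₁) ∩ B_{r₂}(Δ₂)`
contains vertices of both types. -/
theorem ball_inter_nonantipodal (V : Type*) (G : SimpleGraph V) (n : ℕ) (hn : 2 ≤ n)
    (c : V → ZMod 2) (hbip : ∀ u v, G.Adj u v → c u ≠ c v)
    (hgirth : G.egirth = (2 * n : ℕ))
    (hdiam : ∀ u v : V, G.edist u v ≤ (n : ℕ∞))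
    (hthick : ∀ v : V, ∃ w₁ w₂ w₃, w₁ ≠ w₂ ∧ w₁ ≠ w₃ ∧ w₂ ≠ w₃ ∧
      G.Adj v w₁ ∧ G.Adj v w₂ ∧ G.Adj v w₃)
    (a₁ b₁ a₂ b₂ : V) (h₁ : G.Adj a₁ b₁) (h₂ : G.Adj a₂ b₂)
    (hclose : ∃ u v, (u = a₁ ∨ u = b₁) ∧ (v = a₂ ∨ v = b₂) ∧
      G.edist u v ≤ ((n - 2 : ℕ) : ℕ∞))
    (r₁ r₂ : ℕ) (hr₁ : 0 < r₁) (hr₂ : 0 < r₂) (hr : r₁ + r₂ = n - 1) :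
    ∀ τ : ZMod 2, ∃ w, c w = τ ∧ w ∈ edgeBall G a₁ b₁ r₁ ∩ edgeBall G a₂ b₂ r₂ := by
  obtain ⟨u, v, hu, hv, huv⟩ := hclose
  have hne : G.edist u v ≠ ⊤ := ne_top_of_le_ne_top (ENat.coe_ne_top _) huv
  obtain ⟨p, hp⟩ := SimpleGraph.exists_walk_of_edist_ne_top hne
  have hd : p.length ≤ n - 2 := by
    rw [← hp] at huv
    exact_mod_cast huv
  have mem₁ : ∀ w, G.edist w u ≤ (r₁ : ℕ∞) → w ∈ edgeBall G a₁ b₁ r₁ := by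
    intro w hw
    rcases hu with h | h <;> subst h
    · exact min_le_of_left_le hw
    · exact min_le_of_right_le hw
  have mem₂ : ∀ w, G.edist w v ≤ (r₂ : ℕ∞) → w ∈ edgeBall G a₂ b₂ r₂ := by
    intro w hw
    rcases hv with h | h <;> subst h
    · exact min_le_of_left_le hw
    · exact min_le_of_right_le hw
  have key : ∃ w w', G.Adj w w' ∧
      w ∈ edgeBall G a₁ b₁ r₁ ∩ edgeBall G a₂ b₂ r₂ ∧
      w' ∈ edgeBall G a₁ b₁ r₁ ∩ edgeBall G a₂ b₂ r₂ := by
    by_cases hcase : p.length < r₁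
    · -- take `v` and its neighbour in Δ₂
      have hvu : G.edist v u ≤ (r₁ : ℕ∞) := by
        rw [SimpleGraph.edist_comm, ← hp]
        exact_mod_cast hcase.le
      obtain ⟨v', hadj', hvv'⟩ : ∃ v', G.Adj v v' ∧ G.edist v' v ≤ 1 := by
        rcases hv with h | h <;> subst h
        · exact ⟨b₂, h₂, le_of_eq (SimpleGraph.edist_eq_one_iff_adj.mpr h₂.symm)⟩
        · exact ⟨a₂, h₂.symm, le_of_eq (SimpleGraph.edist_eq_one_iff_adj.mpr h₂)⟩
      refine ⟨v, v', hadj', ⟨mem₁ v hvu, mem₂ v (by simp [SimpleGraph.edist_self])⟩,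
        ⟨mem₁ v' ?_, mem₂ v' (hvv'.trans ?_)⟩⟩
      · calc G.edist v' u ≤ G.edist v' v + G.edist v u := SimpleGraph.edist_triangle
          _ ≤ 1 + (p.length : ℕ∞) := add_le_add hvv'
              (by rw [SimpleGraph.edist_comm, ← hp])
          _ = ((1 + p.length : ℕ) : ℕ∞) := by push_cast; ring
          _ ≤ (r₁ : ℕ∞) := by exact_mod_cast (by omega : 1 + p.length ≤ r₁)
      · exact_mod_cast Nat.one_le_cast.mpr hr₂
    · push_neg at hcase
      obtain ⟨hw1, hw2⟩ := getVert_edist_bounds p r₁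
      obtain ⟨hw1', hw2'⟩ := getVert_edist_bounds p (r₁ - 1)
      have hstep : r₁ - 1 + 1 = r₁ := Nat.succ_pred_eq_of_pos hr₁
      have hadj : G.Adj (p.getVert r₁) (p.getVert (r₁ - 1)) := by
        have := p.adj_getVert_succ (i := r₁ - 1) (by omega)
        rw [hstep] at this
        exact this.symm
      refine ⟨p.getVert r₁, p.getVert (r₁ - 1), hadj,
        ⟨mem₁ _ ?_, mem₂ _ (hw2.trans ?_)⟩, ⟨mem₁ _ ?_, mem₂ _ (hw2'.trans ?_)⟩⟩
      · rwa [SimpleGraph.edist_comm]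
      · exact_mod_cast (by omega : p.length - r₁ ≤ r₂)
      · rw [SimpleGraph.edist_comm]
        exact hw1'.trans (by exact_mod_cast (by omega : r₁ - 1 ≤ r₁))
      · exact_mod_cast (by omega : p.length - (r₁ - 1) ≤ r₂)
  obtain ⟨w, w', hadj, hw, hw'⟩ := key
  intro τ
  have hcc : c w ≠ c w' := hbip _ _ hadj
  have : τ = c w ∨ τ = c w' := by
    revert hcc
    generalize c w = x
    generalize c w' = y
    revert τ x y
    decide
  rcases this with h | h
  · exact ⟨w, h.symm, hw⟩
  · exact ⟨w', h.symm, hw'⟩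
end
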